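/- Let v(ρ) = 1/2 - (E²/2)·e^{2/ρ} + (L²/(2ρ²))·e^{-2/ρ} with E² = -(ρ₀-1)·e^{-2/ρ₀}/(ρ₀-2) and L² = -ρ₀²·e^{2/ρ₀}/(ρ₀-2) for fixed ρ₀ ∈ (1,2). Then v''(ρ₀) = -(ρ₀² - 6ρ₀ + 4)/(ρ₀⁴(ρ₀-2)). -/

import Mathlib

open Real

private lemma hD2 (x : ℝ) (hx : x ≠ 0) :
    HasDerivAt (fun ρ : ℝ => 2/ρ) (-(2/x^2)) x := by
  have := (hasDerivAt_inv hx).const_mul (2:ℝ)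
  simpa [div_eq_mul_inv] using this

private lemma hDn2 (x : ℝ) (hx : x ≠ 0) :
    HasDerivAt (fun ρ : ℝ => -2/ρ) (2/x^2) x := by
  have := (hD2 x hx).neg
  simpa [neg_div, Pi.neg_def] using this

private lemma hasDeriv_f (a b x : ℝ) (hx : x ≠ 0) :
    HasDerivAt (fun ρ : ℝ => 1/2 - a * Real.exp (2/ρ) + b/(2*ρ^2) * Real.exp (-2/ρ))
      (2*a*Real.exp (2/x)/x^2 + b*Real.exp (-2/x)*(1/x^4 - 1/x^3)) x := by
  have hE1 : HasDerivAt (fun ρ : ℝ => Real.exp (2/ρ)) (Real.exp (2/x) * (-(2/x^2))) x :=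
    (hD2 x hx).exp
  have hE2 : HasDerivAt (fun ρ : ℝ => Real.exp (-2/ρ)) (Real.exp (-2/x) * (2/x^2)) x :=
    (hDn2 x hx).exp
  have hpow : HasDerivAt (fun ρ : ℝ => ρ^2) (2*x) x := by
    simpa using hasDerivAt_pow 2 x
  have hden : HasDerivAt (fun ρ : ℝ => 2*ρ^2) (2*(2*x)) x := hpow.const_mul 2
  have hdne : 2*x^2 ≠ 0 := by positivity
  have hq : HasDerivAt (fun ρ : ℝ => b/(2*ρ^2))
      ((0 * (2*x^2) - b * (2*(2*x))) / (2*x^2)^2) x :=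
    (hasDerivAt_const x b).div hden hdne
  have H := (((hasDerivAt_const x (1/2:ℝ)).sub ((hasDerivAt_const x a).mul hE1)).add
    (hq.mul hE2))
  refine HasDerivAt.congr_deriv H ?_
  field_simp
  ring

private lemma hasDeriv_g (a b x : ℝ) (hx : x ≠ 0) :
    HasDerivAt (fun ρ : ℝ => 2*a*Real.exp (2/ρ)/ρ^2 + b*Real.exp (-2/ρ)*(1/ρ^4 - 1/ρ^3))
      (2*a*Real.exp (2/x)*(-2/x^4 - 2/x^3)
        + b*Real.exp (-2/x)*(2/x^6 - 6/x^5 + 3/x^4)) x := by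
  have hE1 : HasDerivAt (fun ρ : ℝ => Real.exp (2/ρ)) (Real.exp (2/x) * (-(2/x^2))) x :=
    (hD2 x hx).exp
  have hE2 : HasDerivAt (fun ρ : ℝ => Real.exp (-2/ρ)) (Real.exp (-2/x) * (2/x^2)) x :=
    (hDn2 x hx).exp
  have hpow2 : HasDerivAt (fun ρ : ℝ => ρ^2) (2*x) x := by
    simpa using hasDerivAt_pow 2 x
  have hpow3 : HasDerivAt (fun ρ : ℝ => ρ^3) (3*x^2) x := by
    simpa using hasDerivAt_pow 3 x
  have hpow4 : HasDerivAt (fun ρ : ℝ => ρ^4) (4*x^3) x := by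
    simpa using hasDerivAt_pow 4 x
  have h14 : HasDerivAt (fun ρ : ℝ => 1/ρ^4)
      ((0 * x^4 - 1 * (4*x^3)) / (x^4)^2) x :=
    (hasDerivAt_const x (1:ℝ)).div hpow4 (pow_ne_zero 4 hx)
  have h13 : HasDerivAt (fun ρ : ℝ => 1/ρ^3)
      ((0 * x^3 - 1 * (3*x^2)) / (x^3)^2) x :=
    (hasDerivAt_const x (1:ℝ)).div hpow3 (pow_ne_zero 3 hx)
  have H := ((((hasDerivAt_const x (2*a)).mul hE1).div hpow2 (pow_ne_zero 2 hx)).add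
    (((hasDerivAt_const x b).mul hE2).mul (h14.sub h13)))
  refine HasDerivAt.congr_deriv H ?_
  simp only [Pi.mul_apply, Pi.sub_apply]
  field_simp
  ring

/-- With the equilibrium values of E² and L², the second derivative of the
effective potential at ρ₀ equals -(ρ₀² - 6ρ₀ + 4)/(ρ₀⁴(ρ₀-2)). -/
theorem chazy_curzon_second_derivative (ρ₀ : ℝ) (hρ₀ : ρ₀ ∈ Set.Ioo (1:ℝ) 2) :
    deriv (deriv (fun ρ : ℝ =>
      1/2 - ((-(ρ₀ - 1) * Real.exp (-2/ρ₀) / (ρ₀ - 2))/2) * Real.exp (2/ρ)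
        + ((-ρ₀^2 * Real.exp (2/ρ₀) / (ρ₀ - 2))/(2*ρ^2)) * Real.exp (-2/ρ))) ρ₀
      = -(ρ₀^2 - 6*ρ₀ + 4) / (ρ₀^4 * (ρ₀ - 2)) := by
  obtain ⟨h1, h2⟩ := hρ₀
  have hρne : ρ₀ ≠ 0 := by linarith
  set a : ℝ := (-(ρ₀ - 1) * Real.exp (-2/ρ₀) / (ρ₀ - 2))/2 with ha
  set b : ℝ := -ρ₀^2 * Real.exp (2/ρ₀) / (ρ₀ - 2) with hb
  have hev : (deriv (fun ρ : ℝ =>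
      1/2 - a * Real.exp (2/ρ) + b/(2*ρ^2) * Real.exp (-2/ρ)))
      =ᶠ[nhds ρ₀]
      (fun ρ : ℝ => 2*a*Real.exp (2/ρ)/ρ^2 + b*Real.exp (-2/ρ)*(1/ρ^4 - 1/ρ^3)) := by
    filter_upwards [eventually_ne_nhds hρne] with x hx
    exact (hasDeriv_f a b x hx).deriv
  rw [hev.deriv_eq, (hasDeriv_g a b ρ₀ hρne).deriv]
  rw [ha, hb, show (-2:ℝ)/ρ₀ = -(2/ρ₀) by ring, Real.exp_neg]
  have hexp := Real.exp_ne_zero (2/ρ₀)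
  have h2ne : ρ₀ - 2 ≠ 0 := by linarith
  field_simp
  ring
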